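/- arXiv:2509.07241 — 10 statements merged into one kernel-verified Lean document; each statement's English description precedes it below -/
import Mathlib

section
/- Let (F, θ) be a pointed endofunctor on a category C and (E, M) a prefactorization system on C such that every component θ_C factors as θ_C = μ_C ∘ η_C with η_C ∈ E and μ_C ∈ M, and let (I, η) be the induced pointed endofunctor. If every η_C : C → I(C) is an epimorphism in C, then (I, η) is well-pointed, i.e. Iη = ηI (for every object C, I(η_C) = η_{I(C)}). -/
open CategoryTheory CategoryTheory.Limits

universe v u

/-- `e` is orthogonal to `m`: every commutative square `u ≫ m = e ≫ v`
admits a unique diagonal `w` with `e ≫ w = u` and `w ≫ m = v`. -/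
def Orth {C : Type u} [Category.{v} C] {X Y A B : C} (e : X ⟶ Y) (m : A ⟶ B) : Prop :=
  ∀ (u : X ⟶ A) (v : Y ⟶ B), u ≫ m = e ≫ v → ∃! w : Y ⟶ A, e ≫ w = u ∧ w ≫ m = v

/-- A prefactorization system `(E, M)` on a category `C`: `E` consists exactly of the
morphisms left orthogonal to every morphism of `M`, and `M` consists exactly of the
morphisms right orthogonal to every morphism of `E`. -/
structure Prefactorization (C : Type u) [Category.{v} C] where
  E : MorphismProperty C
  M : MorphismProperty C
  E_iff : ∀ {X Y : C} (e : X ⟶ Y), E e ↔ ∀ {A B : C} (m : A ⟶ B), M m → Orth e m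
  M_iff : ∀ {A B : C} (m : A ⟶ B), M m ↔ ∀ {X Y : C} (e : X ⟶ Y), E e → Orth e m

/-- Let `(F, θ)` be a pointed endofunctor, `(E, M)` a prefactorization system factorizing
each component `θ_C = μ_C ∘ η_C` with `η_C ∈ E`, `μ_C ∈ M`, and `(I, η)` the induced
pointed endofunctor (with `μ : I → F` natural and `θ = μ ∘ η`). If every `η_C` is an
epimorphism, then `(I, η)` is well-pointed: `I(η_C) = η_{I(C)}` for every object `C`. -/
theorem stmt1 {C : Type u} [Category.{v} C] (F : C ⥤ C) (θ : 𝟭 C ⟶ F)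
    (P : Prefactorization C)
    (I : C ⥤ C) (η : 𝟭 C ⟶ I) (μ : I ⟶ F)
    (hη : ∀ X : C, P.E (η.app X)) (hμ : ∀ X : C, P.M (μ.app X))
    (hfac : ∀ X : C, η.app X ≫ μ.app X = θ.app X)
    (hepi : ∀ X : C, Epi (η.app X)) :
    ∀ X : C, I.map (η.app X) = η.app (I.obj X) := by
  intro X
  have h := η.naturality (η.app X)
  simp only [Functor.id_map] at h
  exact ((cancel_epi (η.app X)).mp h.symm)
end

section
/- A well-pointed endofunctor (I, η) on a category C (i.e. Iη = ηI) is idempotent — meaning ηI is an isomorphism, i.e. η_{I(C)} is an isomorphism for every object C — if and only if Fix(I, η) is a reflective full replete subcategory of C whose reflection has unit η, where Fix(I, η) is the full subcategory of C determined by all objects M for which η_M : M → I(M) is an isomorphism. -/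
open CategoryTheory CategoryTheory.Limits

universe v u

/-- A well-pointed endofunctor `(I, η)` (i.e. `Iη = ηI`) is idempotent — `η_{I(C)}` is an
isomorphism for every object `C` — if and only if `Fix(I, η)` (the objects `M` with `η_M`
an isomorphism) is a reflective full replete subcategory of `C` with reflection unit `η`:
it is closed under isomorphic objects, each `I(C)` lies in it, and every `η_C` is universal
among morphisms from `C` to objects of `Fix(I, η)`. -/
theorem stmt2 {C : Type u} [Category.{v} C] (I : C ⥤ C) (η : 𝟭 C ⟶ I)
    (hwp : ∀ X : C, I.map (η.app X) = η.app (I.obj X)) :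
    (∀ X : C, IsIso (η.app (I.obj X))) ↔
      ((∀ (M N : C), IsIso (η.app M) → (M ≅ N) → IsIso (η.app N)) ∧
       (∀ X : C, IsIso (η.app (I.obj X)) ∧
          ∀ (M : C), IsIso (η.app M) → ∀ f : X ⟶ M,
            ∃! g : I.obj X ⟶ M, η.app X ≫ g = f)) := by
  constructor
  · intro hid
    refine ⟨?_, fun X => ⟨hid X, ?_⟩⟩
    · intro M N hM e
      have hnat : η.app N = e.inv ≫ η.app M ≫ I.map e.hom := by
        have := η.naturality e.inv
        simp only [Functor.id_map] at this
        rw [← Category.assoc, this]; simp [← I.map_comp]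
      rw [hnat]
      infer_instance
    · intro M hM f
      refine ⟨I.map f ≫ inv (η.app M), ?_, ?_⟩
      · show η.app X ≫ I.map f ≫ inv (η.app M) = f
        have := η.naturality f
        simp only [Functor.id_map] at this
        rw [← Category.assoc, ← this]; simp
      · intro g hg
        have h1 : η.app (I.obj X) ≫ I.map g = g ≫ η.app M := by
          have := η.naturality g
          simpa using this.symm
        have h2 : I.map (η.app X) ≫ I.map g = I.map f := by
          rw [← I.map_comp, hg]
        rw [hwp] at h2
        have h3 : g ≫ η.app M = I.map f := by rw [← h1, h2]
        rw [← cancel_mono (η.app M), h3]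
        simp
  · intro h X
    exact (h.2 X).1
end

section
/- Let F ⊣ G be an adjunction F : C → X, G : X → C with unit θ : 1_C → GF, let (E, M) be a prefactorization system on C such that every component θ_C factors as θ_C = μ_C ∘ η_C with η_C ∈ E and μ_C ∈ M, and suppose every η_C is an epimorphism. Then the induced well-pointed endofunctor (I, η) is idempotent (η_{I(C)} is an isomorphism for all C); hence there is a reflection I ⊣ H : C → M(F), where H is the full inclusion of M(F) = Fix(I, η), and M(F) equals the full replete subcategory of C determined by the objects M such that θ_M : M → GF(M) belongs to M. Moreover F(η_C) is an isomorphism for every object C. -/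
open CategoryTheory CategoryTheory.Limits

universe v u

lemma orth_iso_comp {C : Type u} [Category.{v} C] {X Y A A' B : C} (e : X ⟶ Y) (i : A' ⟶ A)
    [IsIso i] (m : A ⟶ B) (h : Orth e m) : Orth e (i ≫ m) := by
  intro u v huv
  obtain ⟨w, ⟨hw1, hw2⟩, hw3⟩ := h (u ≫ i) v (by rw [Category.assoc]; exact huv)
  refine ⟨w ≫ inv i, ⟨by rw [← Category.assoc, hw1]; simp, by simp [hw2]⟩, ?_⟩
  rintro y ⟨hy1, hy2⟩
  have : y ≫ i = w := hw3 (y ≫ i) ⟨by rw [← Category.assoc, hy1], by simpa using hy2⟩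
  rw [← this]; simp

lemma orth_comp_iso {C : Type u} [Category.{v} C] {X Y A B B' : C} (e : X ⟶ Y) (i : B ⟶ B')
    [IsIso i] (m : A ⟶ B) (h : Orth e m) : Orth e (m ≫ i) := by
  intro u v huv
  obtain ⟨w, ⟨hw1, hw2⟩, hw3⟩ := h u (v ≫ inv i)
    (by rw [← Category.assoc] at huv ⊢; rw [← huv]; simp)
  refine ⟨w, ⟨hw1, by rw [← Category.assoc, hw2]; simp⟩, ?_⟩
  rintro y ⟨hy1, hy2⟩
  exact hw3 y ⟨hy1, by rw [← hy2]; simp⟩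

universe v' u'

/-- Let `F ⊣ G` be an adjunction with unit `θ`, `(E, M)` a prefactorization system on `C`
factorizing each `θ_C = μ_C ∘ η_C` with `η_C ∈ E` and `μ_C ∈ M` (giving the induced
pointed endofunctor `(I, η)` with `μ : I → F ⋙ G` natural and `θ = μ ∘ η`), and suppose
every `η_C` is an epimorphism. Then `(I, η)` is idempotent (`η_{I(C)}` is iso for all `C`),
`η_C : C → I(C)` is universal among morphisms into the full subcategory
`M(F) = {M | θ_M ∈ M}` (so there is a reflection `I ⊣ H : C → M(F)`),
`M(F)` coincides with `Fix(I, η)`, and every `F(η_C)` is an isomorphism. -/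
theorem stmt3 {C : Type u} [Category.{v} C] {X : Type u'} [Category.{v'} X]
    (F : C ⥤ X) (G : X ⥤ C) (adj : F ⊣ G)
    (P : Prefactorization C)
    (I : C ⥤ C) (η : 𝟭 C ⟶ I) (μ : I ⟶ F ⋙ G)
    (hη : ∀ c : C, P.E (η.app c)) (hμ : ∀ c : C, P.M (μ.app c))
    (hfac : ∀ c : C, η.app c ≫ μ.app c = adj.unit.app c)
    (hepi : ∀ c : C, Epi (η.app c)) :
    (∀ c : C, IsIso (η.app (I.obj c))) ∧
    (∀ (c M₀ : C), P.M (adj.unit.app M₀) →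
      ∀ f : c ⟶ M₀, ∃! g : I.obj c ⟶ M₀, η.app c ≫ g = f) ∧
    (∀ M₀ : C, P.M (adj.unit.app M₀) ↔ IsIso (η.app M₀)) ∧
    (∀ c : C, IsIso (F.map (η.app c))) := by
  -- F(η_c) is epi
  have hFepi : ∀ c : C, Epi (F.map (η.app c)) := by
    intro c
    constructor
    intro Z h1 h2 hh
    have h' := congrArg (adj.homEquiv c Z) hh
    rw [adj.homEquiv_naturality_left, adj.homEquiv_naturality_left] at h'
    haveI := hepi c
    exact (adj.homEquiv _ _).injective ((cancel_epi (η.app c)).1 h')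
  -- F(η_c) is iso
  have hFiso : ∀ c : C, IsIso (F.map (η.app c)) := by
    intro c
    have hsplit : F.map (η.app c) ≫ (F.map (μ.app c) ≫ adj.counit.app (F.obj c)) = 𝟙 _ := by
      rw [← Category.assoc, ← F.map_comp, hfac]
      exact adj.left_triangle_components c
    have hinv : (F.map (μ.app c) ≫ adj.counit.app (F.obj c)) ≫ F.map (η.app c) = 𝟙 _ := by
      haveI := hFepi c
      rw [← cancel_epi (F.map (η.app c)), ← Category.assoc, hsplit, Category.id_comp,
        Category.comp_id]
    exact ⟨_, hsplit, hinv⟩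
  -- universal property (part 2)
  have part2 : ∀ (c M₀ : C), P.M (adj.unit.app M₀) →
      ∀ f : c ⟶ M₀, ∃! g : I.obj c ⟶ M₀, η.app c ≫ g = f := by
    intro c M₀ hM f
    have horth := (P.E_iff (η.app c)).1 (hη c) _ hM
    have hsq : f ≫ adj.unit.app M₀ = η.app c ≫ (μ.app c ≫ G.map (F.map f)) := by
      have := adj.unit.naturality f
      simp only [Functor.id_map, Functor.comp_map] at this
      rw [this, ← hfac c, Category.assoc]
    obtain ⟨w, ⟨hw1, _⟩, _⟩ := horth f (μ.app c ≫ G.map (F.map f)) hsq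
    refine ⟨w, hw1, ?_⟩
    intro y hy
    haveI := hepi c
    exact (cancel_epi (η.app c)).1 (by rw [hy, hw1])
  -- θ_{I c} ∈ M
  have hMIc : ∀ c : C, P.M (adj.unit.app (I.obj c)) := by
    intro c
    haveI := hFiso c
    have hnat : adj.unit.app (I.obj c) = μ.app c ≫ G.map (F.map (η.app c)) := by
      have h1 := adj.unit.naturality (η.app c)
      simp only [Functor.id_map, Functor.comp_map, Functor.id_obj] at h1
      rw [← hfac c, Category.assoc] at h1
      haveI := hepi c
      exact (cancel_epi (η.app c)).1 h1
    rw [hnat, P.M_iff]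
    intro Xx Yy e he
    exact orth_comp_iso e _ _ ((P.M_iff (μ.app c)).1 (hμ c) e he)
  -- part 3
  have part3 : ∀ M₀ : C, P.M (adj.unit.app M₀) ↔ IsIso (η.app M₀) := by
    intro M₀
    constructor
    · intro hM
      obtain ⟨g, hg, _⟩ := part2 M₀ M₀ hM (𝟙 M₀)
      refine ⟨g, hg, ?_⟩
      haveI := hepi M₀
      rw [← cancel_epi (η.app M₀), ← Category.assoc, hg]; simp
    · intro hiso
      rw [← hfac M₀, P.M_iff]
      intro Xx Yy e he
      exact orth_iso_comp e _ _ ((P.M_iff (μ.app M₀)).1 (hμ M₀) e he)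
  exact ⟨fun c => (part3 (I.obj c)).1 (hMIc c), part2, part3, hFiso⟩
end

section
/- Let F ⊣ G be an adjunction F : C → X with unit θ : 1_C → GF on a category C with pullbacks, (E, M) a prefactorization system on C factorizing each θ_C = μ_C ∘ η_C with η_C ∈ E an epimorphism and μ_C ∈ M, and let I ⊣ H : C → M(F) be the induced reflection with unit η. If (a) GF preserves every pullback of a diagram A → I(C) ← C whose right leg is the unit η_C : C → I(C), and (b) η_C ∈ E′ for every object C, where E′ is the largest subclass of E stable under pullback, then the reflection I ⊣ H has stable units. -/
open CategoryTheory CategoryTheory.Limits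

universe v u

universe v' u'

/-- Let `F ⊣ G` be an adjunction with unit `θ` on a category `C` with pullbacks,
`(E, M)` a prefactorization system factorizing each `θ_C = μ_C ∘ η_C` with `η_C ∈ E`
an epimorphism and `μ_C ∈ M`, and `(I, η)` the induced reflection data. If
(a) `G ∘ F` preserves every pullback of a cospan `A ⟶ I(C) ⟵ C` whose right leg is the
unit `η_C`, and (b) every `η_C` lies in `E′`, the largest pullback-stable subclass of `E`,
then the reflection has stable units: `I` preserves every such pullback. -/
theorem stmt4 {C : Type u} [Category.{v} C] [HasPullbacks C]
    {X : Type u'} [Category.{v'} X]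
    (F : C ⥤ X) (G : X ⥤ C) (adj : F ⊣ G)
    (P : Prefactorization C)
    (I : C ⥤ C) (η : 𝟭 C ⟶ I) (μ : I ⟶ F ⋙ G)
    (hη : ∀ c : C, P.E (η.app c)) (hμ : ∀ c : C, P.M (μ.app c))
    (hfac : ∀ c : C, η.app c ≫ μ.app c = adj.unit.app c)
    (hepi : ∀ c : C, Epi (η.app c))
    (ha : ∀ (c : C) {P' A : C} (g : A ⟶ I.obj c) (q : P' ⟶ c) (p : P' ⟶ A),
      IsPullback q p (η.app c) g →
      IsPullback ((F ⋙ G).map q) ((F ⋙ G).map p) ((F ⋙ G).map (η.app c)) ((F ⋙ G).map g))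
    (hb : ∀ (c : C) {P' A : C} (q : P' ⟶ c) (p : P' ⟶ A) (g : A ⟶ I.obj c),
      IsPullback q p (η.app c) g → P.E p) :
    ∀ (c : C) {P' A : C} (g : A ⟶ I.obj c) (q : P' ⟶ c) (p : P' ⟶ A),
      IsPullback q p (η.app c) g →
      IsPullback (I.map q) (I.map p) (I.map (η.app c)) (I.map g) := by
  intro c P' A g q p hpb
  -- `I η_x = η_{I x}` for every `x`, by naturality and epi-ness of `η_x`.
  have hIη : ∀ x : C, I.map (η.app x) = η.app (I.obj x) := by
    intro x
    have h := η.naturality (η.app x)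
    simp only [Functor.id_map] at h
    exact ((cancel_epi (η.app x)).mp h.symm)
  -- `η_{I x}` is an isomorphism for every `x`.
  have hiso : ∀ x : C, IsIso (η.app (I.obj x)) := by
    intro x
    -- the map `I I x ⟶ G F x` splitting `μ_x` through `η_{I x}`
    set w : I.obj (I.obj x) ⟶ G.obj (F.obj x) :=
      μ.app (I.obj x) ≫ G.map (F.map (μ.app x) ≫ adj.counit.app (F.obj x)) with hw
    have hsq : (𝟙 (I.obj x)) ≫ μ.app x = η.app (I.obj x) ≫ w := by
      have hn := adj.unit.naturality (μ.app x)
      simp only [Functor.id_map, Functor.comp_map] at hn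
      rw [Category.id_comp, hw, ← Category.assoc, hfac (I.obj x), G.map_comp,
        ← Category.assoc, ← hn, Category.assoc]
      simp
    obtain ⟨ρ, ⟨hρ1, _⟩, _⟩ :=
      (P.E_iff (η.app (I.obj x))).mp (hη (I.obj x)) (μ.app x) (hμ x) (𝟙 _) w hsq
    have : Epi (η.app (I.obj x)) := hepi (I.obj x)
    refine ⟨ρ, hρ1, ?_⟩
    rw [← cancel_epi (η.app (I.obj x)), ← Category.assoc, hρ1]
    simp
  -- data from the hypotheses for this particular pullback
  have hGF := ha c g q p hpb
  have hpE : P.E p := hb c q p g hpb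
  -- the map `v : A ⟶ G F P'` induced by the preserved pullback
  have hcone : (g ≫ μ.app c) ≫ (F ⋙ G).map (η.app c) = adj.unit.app A ≫ (F ⋙ G).map g := by
    have h1 := μ.naturality (η.app c)
    have h2 := adj.unit.naturality g
    simp only [Functor.id_map] at h2
    simp only [Functor.id_obj] at h1 h2
    rw [Category.assoc, ← h1, ← h2, hIη c, ← hfac (I.obj c)]
  set v : A ⟶ (F ⋙ G).obj P' := hGF.lift (g ≫ μ.app c) (adj.unit.app A) hcone with hv
  have hv1 : v ≫ (F ⋙ G).map q = g ≫ μ.app c := hGF.lift_fst _ _ _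
  have hv2 : v ≫ (F ⋙ G).map p = adj.unit.app A := hGF.lift_snd _ _ _
  have hpv : p ≫ v = adj.unit.app P' := by
    apply hGF.hom_ext
    · rw [Category.assoc, hv1]
      have h := adj.unit.naturality q
      simp only [Functor.id_map] at h
      rw [← h, ← hfac c, ← Category.assoc, ← Category.assoc, hpb.w]
    · rw [Category.assoc, hv2]
      have h := adj.unit.naturality p
      simp only [Functor.id_map] at h
      rw [h]
  -- the diagonal `s : A ⟶ I P'` from orthogonality `p ⊥ μ_{P'}`
  have hsqs : η.app P' ≫ μ.app P' = p ≫ v := by rw [hfac P', hpv]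
  obtain ⟨s, ⟨hs1, hs2⟩, _⟩ :=
    (P.E_iff p).mp hpE (μ.app P') (hμ P') (η.app P') v hsqs
  -- `s ≫ I p = η_A`, by uniqueness of diagonals for `p ⊥ μ_A`
  have hsqA : (p ≫ η.app A) ≫ μ.app A = p ≫ adj.unit.app A := by
    rw [Category.assoc, hfac A]
  obtain ⟨d, _, hdu⟩ :=
    (P.E_iff p).mp hpE (μ.app A) (hμ A) (p ≫ η.app A) (adj.unit.app A) hsqA
  have hsIp : s ≫ I.map p = η.app A := by
    have hcand1 : p ≫ (s ≫ I.map p) = p ≫ η.app A ∧ (s ≫ I.map p) ≫ μ.app A = adj.unit.app A := by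
      constructor
      · rw [← Category.assoc, hs1]
        have h := η.naturality p
        simp only [Functor.id_map] at h
        rw [h]
      · have h := μ.naturality p
        rw [Category.assoc, h, ← Category.assoc, hs2, hv2]
    have hcand2 : p ≫ η.app A = p ≫ η.app A ∧ η.app A ≫ μ.app A = adj.unit.app A :=
      ⟨rfl, hfac A⟩
    rw [hdu _ hcand1, hdu _ hcand2]
  -- `I p` is an isomorphism
  have hisoIp : IsIso (I.map p) := by
    have h1 : IsIso (η.app (I.obj P')) := hiso P'
    have h2 : IsIso (η.app (I.obj A)) := hiso A
    refine ⟨I.map s ≫ inv (η.app (I.obj P')), ?_, ?_⟩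
    · rw [← Category.assoc, ← I.map_comp, hs1, hIη P']
      simp
    · rw [Category.assoc]
      have hn : inv (η.app (I.obj P')) ≫ I.map p = I.map (I.map p) ≫ inv (η.app (I.obj A)) := by
        rw [IsIso.inv_comp_eq, ← Category.assoc, ← η.naturality (I.map p)]
        simp
      rw [hn, ← Category.assoc, ← I.map_comp, hsIp, hIη A]
      simp
  -- conclude
  have hisoIηc : IsIso (I.map (η.app c)) := by rw [hIη c]; exact hiso c
  exact IsPullback.of_vert_isIso ⟨by rw [← I.map_comp, ← I.map_comp, hpb.w]⟩
end

section
/- Let F ⊣ G be an adjunction F : C → X with unit θ : 1_C → GF on a category C with pullbacks, (E, M) a prefactorization system on C factorizing each θ_C = μ_C ∘ η_C with η_C ∈ E an epimorphism and μ_C ∈ M, and let I ⊣ H : C → M(F) be the induced reflection. If the reflection I ⊣ H has stable units, then GF preserves every pullback of a diagram A → I(C) ← C whose right leg is the unit η_C : C → I(C). -/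
open CategoryTheory CategoryTheory.Limits

universe v u

universe v' u'

/-- Let `F ⊣ G` be an adjunction with unit `θ` on a category `C` with pullbacks,
`(E, M)` a prefactorization system factorizing each `θ_C = μ_C ∘ η_C` with `η_C ∈ E`
an epimorphism and `μ_C ∈ M`, and `(I, η)` the induced reflection data. If the
reflection has stable units (`I` preserves every pullback of a cospan `A ⟶ I(C) ⟵ C`
whose right leg is the unit `η_C`), then `G ∘ F` preserves every such pullback. -/
theorem stmt5 {C : Type u} [Category.{v} C] [HasPullbacks C]
    {X : Type u'} [Category.{v'} X]
    (F : C ⥤ X) (G : X ⥤ C) (adj : F ⊣ G)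
    (P : Prefactorization C)
    (I : C ⥤ C) (η : 𝟭 C ⟶ I) (μ : I ⟶ F ⋙ G)
    (hη : ∀ c : C, P.E (η.app c)) (hμ : ∀ c : C, P.M (μ.app c))
    (hfac : ∀ c : C, η.app c ≫ μ.app c = adj.unit.app c)
    (hepi : ∀ c : C, Epi (η.app c))
    (hsu : ∀ (c : C) {P' A : C} (g : A ⟶ I.obj c) (q : P' ⟶ c) (p : P' ⟶ A),
      IsPullback q p (η.app c) g →
      IsPullback (I.map q) (I.map p) (I.map (η.app c)) (I.map g)) :
    ∀ (c : C) {P' A : C} (g : A ⟶ I.obj c) (q : P' ⟶ c) (p : P' ⟶ A),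
      IsPullback q p (η.app c) g →
      IsPullback ((F ⋙ G).map q) ((F ⋙ G).map p) ((F ⋙ G).map (η.app c)) ((F ⋙ G).map g) := by
  -- A split mono which is epi is iso.
  have isoOf : ∀ {A B : C} (f : A ⟶ B) (w : B ⟶ A), f ≫ w = 𝟙 A → Epi f → IsIso f := by
    intro A B f w h hf
    refine ⟨w, h, ?_⟩
    have : f ≫ w ≫ f = f ≫ 𝟙 B := by
      rw [← Category.assoc, h, Category.id_comp, Category.comp_id]
    exact hf.left_cancellation _ _ this
  -- η is iso at every object of the form G.obj x.
  have hGiso : ∀ x : X, IsIso (η.app (G.obj x)) := by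
    intro x
    refine isoOf _ (μ.app (G.obj x) ≫ G.map (adj.counit.app x)) ?_ (hepi _)
    rw [← Category.assoc, hfac]
    exact adj.right_triangle_components x
  -- F inverts every η component.
  have hFiso : ∀ Z : C, IsIso (F.map (η.app Z)) := by
    intro Z
    have hGi := hGiso (F.obj Z)
    set e : I.obj Z ⟶ G.obj (F.obj Z) :=
      I.map (adj.unit.app Z) ≫ inv (η.app (G.obj (F.obj Z))) with he_def
    have hnatθ : η.app Z ≫ I.map (adj.unit.app Z)
        = adj.unit.app Z ≫ η.app (G.obj (F.obj Z)) := by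
      simpa using (η.naturality (adj.unit.app Z)).symm
    have he : η.app Z ≫ e = adj.unit.app Z := by
      rw [he_def, ← Category.assoc, hnatθ, Category.assoc, IsIso.hom_inv_id,
        Category.comp_id]
    have he2 : e ≫ G.map (F.map (η.app Z)) = adj.unit.app (I.obj Z) := by
      apply (hepi Z).left_cancellation
      rw [← Category.assoc, he]
      exact (adj.unit.naturality (η.app Z)).symm
    have hc : adj.counit.app (F.obj Z) ≫ F.map (η.app Z)
        = F.map (G.map (F.map (η.app Z))) ≫ adj.counit.app (F.obj (I.obj Z)) := by
      simpa only [Functor.id_obj, Functor.id_map, Functor.comp_obj, Functor.comp_map] using (adj.counit.naturality (F.map (η.app Z))).symm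
    refine ⟨F.map e ≫ adj.counit.app (F.obj Z), ?_, ?_⟩
    · rw [← Category.assoc, ← F.map_comp, he]
      exact adj.left_triangle_components Z
    · rw [Category.assoc, hc, ← Category.assoc, ← F.map_comp, he2]
      exact adj.left_triangle_components (I.obj Z)
  -- η is iso at I.obj c.
  have hIciso : ∀ c : C, IsIso (η.app (I.obj c)) := by
    intro c
    have horth : Orth (η.app (I.obj c)) (μ.app c) :=
      (P.E_iff _).mp (hη (I.obj c)) _ (hμ c)
    have h1 : adj.unit.app (I.obj c) ≫ G.map (F.map (μ.app c)) =
        μ.app c ≫ adj.unit.app (G.obj (F.obj c)) := by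
      simpa only [Functor.id_obj, Functor.id_map, Functor.comp_obj, Functor.comp_map] using (adj.unit.naturality (μ.app c)).symm
    have hsq : (𝟙 (I.obj c)) ≫ μ.app c = η.app (I.obj c) ≫
        (μ.app (I.obj c) ≫ G.map (F.map (μ.app c)) ≫ G.map (adj.counit.app (F.obj c))) := by
      rw [Category.id_comp, ← Category.assoc, hfac, ← Category.assoc, h1, Category.assoc,
        adj.right_triangle_components (F.obj c)]
      simp
    obtain ⟨w, ⟨hw1, _⟩, _⟩ := horth (𝟙 _) _ hsq
    exact isoOf _ w hw1 (hepi _)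
  -- I.map (η.app c) = η.app (I.obj c).
  have hIeq : ∀ c : C, I.map (η.app c) = η.app (I.obj c) := by
    intro c
    apply (hepi c).left_cancellation
    exact (η.naturality (η.app c)).symm
  intro c P' A g q p hpb
  -- I.map p is iso by stable units.
  have hsq := hsu c g q p hpb
  have hIη : IsIso (I.map (η.app c)) := by rw [hIeq]; exact hIciso c
  have hIp : IsIso (I.map p) := by
    have w : (I.map g ≫ inv (I.map (η.app c))) ≫ I.map (η.app c) = 𝟙 _ ≫ I.map g := by
      rw [Category.assoc, IsIso.inv_hom_id, Category.comp_id, Category.id_comp]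
    refine ⟨hsq.lift _ _ w, ?_, hsq.lift_snd _ _ w⟩
    apply hsq.hom_ext
    · rw [Category.assoc, hsq.lift_fst, Category.id_comp, ← Category.assoc, ← hsq.w,
        Category.assoc, IsIso.hom_inv_id, Category.comp_id]
    · rw [Category.assoc, hsq.lift_snd, Category.comp_id, Category.id_comp]
  -- F.map p is iso.
  have hFP' := hFiso P'
  have hFA := hFiso A
  have hFp : IsIso (F.map p) := by
    have hnat : p ≫ η.app A = η.app P' ≫ I.map p := η.naturality p
    have heq : F.map p = (F.map (η.app P') ≫ F.map (I.map p)) ≫ inv (F.map (η.app A)) := by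
      rw [← F.map_comp, ← hnat, F.map_comp, Category.assoc, IsIso.hom_inv_id,
        Category.comp_id]
    rw [heq]
    infer_instance
  have h1 : IsIso ((F ⋙ G).map p) := by
    show IsIso (G.map (F.map p))
    infer_instance
  have h2 : IsIso ((F ⋙ G).map (η.app c)) := by
    have := hFiso c
    show IsIso (G.map (F.map (η.app c)))
    infer_instance
  exact IsPullback.of_vert_isIso ⟨by rw [← Functor.map_comp, ← Functor.map_comp, hpb.w]⟩
end

section
/- Let F ⊣ G be an adjunction F : C → X with unit θ : 1_C → GF, and let N be a full subcategory of C whose set of objects is a generating set for C. Then the unit morphism θ_N : N → GF(N) is a monomorphism for every object N of N if and only if the restriction of the left adjoint F to N is faithful. -/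
open CategoryTheory CategoryTheory.Limits

universe v u v' u'

/-- Let `F ⊣ G` be an adjunction with unit `θ` and `N` a set of objects of `C` which is
a generating set. Then every unit morphism `θ_n` with `n ∈ N` is a monomorphism if and
only if the restriction of the left adjoint `F` to the full subcategory on `N` is
faithful (injective on each hom-set between objects of `N`). -/
theorem stmt7 {C : Type u} [Category.{v} C] {X : Type u'} [Category.{v'} X]
    (F : C ⥤ X) (G : X ⥤ C) (adj : F ⊣ G)
    (N : Set C)
    (hgen : ∀ {A B : C} (f f' : A ⟶ B), f ≠ f' → ∃ n ∈ N, ∃ g : n ⟶ A, g ≫ f ≠ g ≫ f') :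
    (∀ n ∈ N, Mono (adj.unit.app n)) ↔
      ∀ n ∈ N, ∀ n' ∈ N, Function.Injective (fun g : n ⟶ n' => F.map g) := by
  have key : ∀ {A B : C} (h : A ⟶ B),
      h ≫ adj.unit.app B = adj.unit.app A ≫ G.map (F.map h) := by
    intro A B h
    exact (adj.unit.naturality h)
  constructor
  · intro hmono n hn n' hn' g g' hgg
    simp only at hgg
    have : g ≫ adj.unit.app n' = g' ≫ adj.unit.app n' := by
      rw [key g, key g', hgg]
    have := hmono n' hn'
    exact (cancel_mono (adj.unit.app n')).mp ‹g ≫ adj.unit.app n' = g' ≫ adj.unit.app n'›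
  · intro hfaith n hn
    constructor
    intro A f f' hff
    by_contra hne
    obtain ⟨m, hm, g, hg⟩ := hgen f f' hne
    apply hg
    have hFeq : F.map (g ≫ f) = F.map (g ≫ f') := by
      have h1 : adj.unit.app m ≫ G.map (F.map (g ≫ f)) =
          adj.unit.app m ≫ G.map (F.map (g ≫ f')) := by
        rw [← key, ← key]
        rw [show adj.unit.app ((𝟭 C).obj n) = adj.unit.app n from rfl, Category.assoc, Category.assoc, hff]
      exact (adj.homEquiv m (F.obj n)).injective
        (by simpa [Adjunction.homEquiv_unit] using h1)
    exact hfaith m hm n hn hFeq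
end

section
/- Let D be a small category, C = Set^{D^op} the category of presheaves on D, and F ⊣ G an adjunction F : Set^{D^op} → X with unit θ. If the composite F ∘ y of F with the Yoneda embedding y : D → Set^{D^op} is faithful, and the right adjoint G preserves coproducts, then for every family (D_i)_{i∈I} of objects of D, the unit morphism θ at the coproduct ∐_{i∈I} D(−, D_i) of representable presheaves is a monomorphism in Set^{D^op}. -/
open CategoryTheory CategoryTheory.Limits

universe u v' u'

noncomputable def evalSigmaAux {D : Type u} [SmallCategory D] {ι : Type u}
    (H : ι → (Dᵒᵖ ⥤ Type u)) (d : Dᵒᵖ) :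
    colimit (Discrete.functor H ⋙ (evaluation Dᵒᵖ (Type u)).obj d) ≅ ∐ fun i => (H i).obj d :=
  HasColimit.isoOfNatIso
    (Discrete.natIso (F := Discrete.functor H ⋙ (evaluation Dᵒᵖ (Type u)).obj d)
      (G := Discrete.functor fun i => (H i).obj d) (fun _ => Iso.refl _))

/-- Evaluate a coproduct of presheaves at an object, landing in a sigma type. -/
noncomputable def evalSigma {D : Type u} [SmallCategory D] {ι : Type u}
    (H : ι → (Dᵒᵖ ⥤ Type u)) (d : Dᵒᵖ) :
    (∐ H).obj d → Σ i, (H i).obj d := fun x =>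
  (Types.coproductIso fun i => (H i).obj d).hom
    ((evalSigmaAux H d).hom
      ((colimitObjIsoColimitCompEvaluation (Discrete.functor H) d).hom x))

lemma evalSigma_injective {D : Type u} [SmallCategory D] {ι : Type u}
    (H : ι → (Dᵒᵖ ⥤ Type u)) (d : Dᵒᵖ) : Function.Injective (evalSigma H d) := by
  intro x y h
  dsimp [evalSigma] at h
  have h1 := (Types.coproductIso fun i => (H i).obj d).toEquiv.injective h
  have h2 := (evalSigmaAux H d).toEquiv.injective h1
  exact (colimitObjIsoColimitCompEvaluation (Discrete.functor H) d).toEquiv.injective h2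

lemma evalSigma_ι {D : Type u} [SmallCategory D] {ι : Type u}
    (H : ι → (Dᵒᵖ ⥤ Type u)) (d : Dᵒᵖ) (i : ι) (u : (H i).obj d) :
    evalSigma H d ((Sigma.ι H i).app d u) = ⟨i, u⟩ := by
  have h1 : (Sigma.ι H i).app d ≫ (colimitObjIsoColimitCompEvaluation (Discrete.functor H) d).hom
      = colimit.ι (Discrete.functor H ⋙ (evaluation Dᵒᵖ (Type u)).obj d) ⟨i⟩ :=
    colimitObjIsoColimitCompEvaluation_ι_app_hom (Discrete.functor H) ⟨i⟩ d
  have h2 : colimit.ι (Discrete.functor H ⋙ (evaluation Dᵒᵖ (Type u)).obj d) ⟨i⟩ ≫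
      (evalSigmaAux H d).hom = Sigma.ι (fun i => (H i).obj d) i := by
    simp [evalSigmaAux, Sigma.ι]
  have h3 := Types.coproductIso_ι_comp_hom (fun i => (H i).obj d) i
  dsimp [evalSigma]
  have e1 := congrArg (fun t => t u) h1
  have e2 := congrArg (fun t => t u) h2
  have e3 := congrArg (fun t => t u) h3
  simp only [types_comp_apply] at e1 e2 e3
  rw [e1, e2, e3]
  rfl

lemma evalSigma_surj {D : Type u} [SmallCategory D] {ι : Type u}
    (H : ι → (Dᵒᵖ ⥤ Type u)) (d : Dᵒᵖ) (x : (∐ H).obj d) :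
    ∃ i u, (Sigma.ι H i).app d u = x := by
  rcases hval : evalSigma H d x with ⟨i, u⟩
  refine ⟨i, u, evalSigma_injective H d ?_⟩
  rw [evalSigma_ι, hval]

/-- Let `D` be a small category, `C = Set^{Dᵒᵖ}` the category of presheaves on `D`, and
`F ⊣ G` an adjunction with unit `θ`. If `F ∘ y` is faithful (`y` the Yoneda embedding)
and `G` preserves coproducts, then for every family `(D_i)` of objects of `D` the unit
morphism at the coproduct `∐ᵢ D(−, D_i)` of representables is a monomorphism. -/
theorem stmt9 {D : Type u} [SmallCategory D] {X : Type u'} [Category.{v'} X]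
    (F : (Dᵒᵖ ⥤ Type u) ⥤ X) (G : X ⥤ Dᵒᵖ ⥤ Type u) (adj : F ⊣ G)
    (hfaithful : (yoneda ⋙ F).Faithful)
    (hG : ∀ ι' : Type u, PreservesColimitsOfShape (Discrete ι') G)
    {ι : Type u} (Di : ι → D) :
    Mono (adj.unit.app (∐ fun i => yoneda.obj (Di i))) := by
  letI := hG ι
  letI : PreservesColimitsOfSize.{u, u} F := adj.leftAdjoint_preservesColimits
  set H : ι → (Dᵒᵖ ⥤ Type u) := fun i => yoneda.obj (Di i) with hH
  rw [NatTrans.mono_iff_mono_app]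
  intro d
  rw [CategoryTheory.mono_iff_injective]
  intro a b hab
  obtain ⟨i, f, rfl⟩ := evalSigma_surj H d a
  obtain ⟨j, f', rfl⟩ := evalSigma_surj H d b
  have nat : ∀ (k : ι) (g : (H k).obj d),
      (adj.unit.app (∐ H)).app d ((Sigma.ι H k).app d g)
      = ((F ⋙ G).map (Sigma.ι H k)).app d ((adj.unit.app (H k)).app d g) := by
    intro k g
    exact congrFun (congrArg (fun t => t.app d) (adj.unit.naturality (Sigma.ι H k))) g
  rw [nat i f, nat j f'] at hab
  set J := Discrete.functor H with hJ
  set c1 := preservesColimitIso (F ⋙ G) J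
  set c2 := HasColimit.isoOfNatIso (Discrete.natIso (F := J ⋙ F ⋙ G)
      (G := Discrete.functor fun k => (F ⋙ G).obj (H k)) fun _ => Iso.refl _)
  have hiso : ∀ (k : ι),
      (F ⋙ G).map (Sigma.ι H k) ≫ c1.hom ≫ c2.hom
        = Sigma.ι (fun k => (F ⋙ G).obj (H k)) k := by
    intro k
    show (F ⋙ G).map (colimit.ι J ⟨k⟩) ≫ c1.hom ≫ c2.hom = _
    rw [← Category.assoc, ι_preservesColimitIso_hom]
    simp [c2, Sigma.ι]
  set Φ : ((F ⋙ G).obj (∐ H)).obj d → Σ k, ((F ⋙ G).obj (H k)).obj d := fun x =>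
    evalSigma (fun k => (F ⋙ G).obj (H k)) d (c2.hom.app d (c1.hom.app d x))
  have hΦ : ∀ (k : ι) (z : ((F ⋙ G).obj (H k)).obj d),
      Φ (((F ⋙ G).map (Sigma.ι H k)).app d z) = ⟨k, z⟩ := by
    intro k z
    have := congrFun (congrArg (fun t => t.app d) (hiso k)) z
    simp only [NatTrans.comp_app, types_comp_apply] at this
    show evalSigma _ d _ = _
    rw [this, evalSigma_ι]
  have hsig := congrArg Φ hab
  rw [hΦ i, hΦ j] at hsig
  obtain ⟨rfl, hu⟩ := Sigma.mk.inj_iff.mp hsig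
  have hu' : (adj.unit.app (H i)).app d f = (adj.unit.app (H i)).app d f' :=
    eq_of_heq hu
  -- now deduce f = f'
  have claim1 : ∀ g : (H i).obj d,
      yoneda.map (show d.unop ⟶ Di i from g) ≫ adj.unit.app (H i)
        = adj.homEquiv (yoneda.obj d.unop) (F.obj (H i)) (F.map (yoneda.map g)) := by
    intro g
    rw [Adjunction.homEquiv_unit]
    exact (adj.unit.naturality (yoneda.map g))
  have claim2 : ∀ g : (H i).obj d,
      yonedaEquiv (yoneda.map (show d.unop ⟶ Di i from g) ≫ adj.unit.app (H i))
        = (adj.unit.app (H i)).app d g := by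
    intro g
    rw [yonedaEquiv_apply]
    simp
  have heq : yoneda.map (show d.unop ⟶ Di i from f) ≫ adj.unit.app (H i)
      = yoneda.map (show d.unop ⟶ Di i from f') ≫ adj.unit.app (H i) := by
    apply yonedaEquiv.injective
    rw [claim2, claim2, hu']
  rw [claim1, claim1] at heq
  have hF : F.map (yoneda.map (show d.unop ⟶ Di i from f))
      = F.map (yoneda.map (show d.unop ⟶ Di i from f')) :=
    (adj.homEquiv _ _).injective heq
  have : (show d.unop ⟶ Di i from f) = f' := hfaithful.map_injective hF
  rw [show f = f' from this]
end

section
/- Let J be a small pseudo-filtered category (every connected component of J is filtered) and M : J → Set a functor. Then every component θ_{M,j} : M(j) → Colim(M) of the colimit cocone of M is injective if and only if M(u) : M(j) → M(j′) is injective for every morphism u : j → j′ of J. -/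
open CategoryTheory CategoryTheory.Limits

universe u

section Aux

variable {J : Type u} [SmallCategory J]

private lemma stmt14_key (hpf : ∀ c : ConnectedComponents J, IsFiltered (ConnectedComponents.Component c))
    (M : J ⥤ Type u) :
    ∀ {p q : Σ j, M.obj j}, Relation.EqvGen (M.ColimitTypeRel) p q →
      ∃ (k : J) (f : p.1 ⟶ k) (g : q.1 ⟶ k), M.map f p.2 = M.map g q.2 := by
  intro p q h
  induction h with
  | rel p q hr =>
    obtain ⟨f, hf⟩ := hr
    exact ⟨q.1, f, 𝟙 q.1, by simp [hf]⟩
  | refl p => exact ⟨p.1, 𝟙 p.1, 𝟙 p.1, rfl⟩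
  | symm p q _ ih =>
    obtain ⟨k, f, g, e⟩ := ih
    exact ⟨k, g, f, e.symm⟩
  | trans p q r _ _ ih₁ ih₂ =>
    obtain ⟨k₁, f₁, g₁, e₁⟩ := ih₁
    obtain ⟨k₂, f₂, g₂, e₂⟩ := ih₂
    -- k₁ and k₂ are in the same connected component (both are targets of arrows from q.1)
    set c : ConnectedComponents J := Quotient.mk'' k₁ with hc
    haveI := hpf c
    have hk₂ : (Quotient.mk'' k₂ : ConnectedComponents J) = c :=
      Quotient.sound' ((Zigzag.of_inv f₂).trans (Zigzag.of_hom g₁))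
    let A : ConnectedComponents.Component c := ⟨k₁, rfl⟩
    let B : ConnectedComponents.Component c := ⟨k₂, hk₂⟩
    let Q : ConnectedComponents.Component c := ⟨q.1, Quotient.sound' (Zigzag.of_hom g₁)⟩
    let K := IsFiltered.max A B
    let u : A ⟶ K := IsFiltered.leftToMax A B
    let v : B ⟶ K := IsFiltered.rightToMax A B
    -- two parallel morphisms Q ⟶ K in the component
    let s : Q ⟶ K := ObjectProperty.homMk (g₁ ≫ u.hom)
    let t : Q ⟶ K := ObjectProperty.homMk (f₂ ≫ v.hom)
    let w : K ⟶ IsFiltered.coeq s t := IsFiltered.coeqHom s t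
    have hw : s ≫ w = t ≫ w := IsFiltered.coeq_condition s t
    have hwJ : (g₁ ≫ u.hom) ≫ w.hom =
        (f₂ ≫ v.hom) ≫ w.hom :=
      congrArg (ConnectedComponents.ι c).map hw
    refine ⟨(IsFiltered.coeq s t).obj, f₁ ≫ u.hom ≫ w.hom,
        g₂ ≫ v.hom ≫ w.hom, ?_⟩
    have h₁ : M.map (f₁ ≫ u.hom ≫ w.hom) p.2
        = M.map (u.hom ≫ w.hom) (M.map g₁ q.2) := by
      rw [M.map_comp, types_comp_apply, e₁]
    have h₂ : M.map (g₂ ≫ v.hom ≫ w.hom) r.2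
        = M.map (v.hom ≫ w.hom) (M.map f₂ q.2) := by
      rw [M.map_comp, types_comp_apply, ← e₂]
    rw [h₁, h₂, ← types_comp_apply (M.map g₁) (M.map _), ← M.map_comp,
      ← types_comp_apply (M.map f₂) (M.map _), ← M.map_comp, ← Category.assoc, ← Category.assoc,
      hwJ]

end Aux

/-- Let `J` be a small pseudo-filtered category (every connected component of `J` is
filtered) and `M : J ⥤ Set` a functor. Then every component `θ_{M,j} : M(j) → Colim M`
of the colimit cocone of `M` is injective if and only if `M(u)` is injective for every
morphism `u` of `J`. -/
theorem stmt14 {J : Type u} [SmallCategory J]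
    (hpf : ∀ c : ConnectedComponents J, IsFiltered (ConnectedComponents.Component c))
    (M : J ⥤ Type u) :
    (∀ j : J, Function.Injective (colimit.ι M j)) ↔
      ∀ {j j' : J} (u : j ⟶ j'), Function.Injective (M.map u) := by
  constructor
  · intro h j j' u
    have hw : M.map u ≫ colimit.ι M j' = colimit.ι M j := colimit.w M u
    have : Function.Injective (colimit.ι M j' ∘ M.map u) := by
      have : colimit.ι M j' ∘ M.map u = colimit.ι M j := by
        funext x; exact colimit.w_apply M u x
      rw [this]; exact h j
    exact Function.Injective.of_comp this
  · intro h j a b hab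
    obtain ⟨k, f, g, e⟩ := stmt14_key hpf M (Types.colimit_eq hab)
    -- f g : j ⟶ k parallel; coequalize inside the component of j
    set c : ConnectedComponents J := Quotient.mk'' j with hc
    haveI := hpf c
    let A : ConnectedComponents.Component c := ⟨j, rfl⟩
    let B : ConnectedComponents.Component c := ⟨k, Quotient.sound' (Zigzag.of_inv f)⟩
    let f' : A ⟶ B := ObjectProperty.homMk f
    let g' : A ⟶ B := ObjectProperty.homMk g
    let w : B ⟶ IsFiltered.coeq f' g' := IsFiltered.coeqHom f' g'
    have hw : f' ≫ w = g' ≫ w := IsFiltered.coeq_condition f' g'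
    have hwJ : f ≫ w.hom = g ≫ w.hom := congrArg (ConnectedComponents.ι c).map hw
    apply h (f ≫ w.hom)
    have : M.map (f ≫ w.hom) a = M.map (g ≫ w.hom) b := by
      rw [M.map_comp, M.map_comp, types_comp_apply, types_comp_apply, e]
    rw [this, ← hwJ]
end

section
/- Let J be a small pseudo-filtered category (every connected component of J is filtered). Then the colimit functor Colim : Set^J → Set preserves pullbacks. -/
open CategoryTheory CategoryTheory.Limits

universe u

namespace Stmt15Aux

variable {J : Type u} [SmallCategory J]

section PseudoFiltered

variable (hpf : ∀ c : ConnectedComponents J, IsFiltered (ConnectedComponents.Component c))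

include hpf

/-- In a pseudo-filtered category, any two zigzag-related objects admit a cocone. -/
lemma cocone_of_zigzag {j k : J} (h : Zigzag j k) :
    ∃ (l : J) (_ : j ⟶ l) (_ : k ⟶ l), True := by
  have hc : (Quotient.mk'' j : ConnectedComponents J) = Quotient.mk'' k := Quotient.sound' h
  haveI := hpf (Quotient.mk'' j)
  let j' : ConnectedComponents.Component (Quotient.mk'' j : ConnectedComponents J) := ⟨j, rfl⟩
  let k' : ConnectedComponents.Component (Quotient.mk'' j : ConnectedComponents J) := ⟨k, hc.symm⟩
  exact ⟨(IsFiltered.max j' k').obj, (IsFiltered.leftToMax j' k').hom,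
    (IsFiltered.rightToMax j' k').hom, trivial⟩

/-- In a pseudo-filtered category, parallel pairs can be coequalized. -/
lemma coeq_of_parallel {j k : J} (f g : j ⟶ k) :
    ∃ (l : J) (h : k ⟶ l), f ≫ h = g ≫ h := by
  have hc : (Quotient.mk'' j : ConnectedComponents J) = Quotient.mk'' k :=
    Quotient.sound' (Zigzag.of_hom f)
  haveI := hpf (Quotient.mk'' k)
  let j' : ConnectedComponents.Component (Quotient.mk'' k : ConnectedComponents J) := ⟨j, hc⟩
  let k' : ConnectedComponents.Component (Quotient.mk'' k : ConnectedComponents J) := ⟨k, rfl⟩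
  let f' : j' ⟶ k' := ObjectProperty.homMk f
  let g' : j' ⟶ k' := ObjectProperty.homMk g
  exact ⟨(IsFiltered.coeq f' g').obj, (IsFiltered.coeqHom f' g').hom,
    congrArg (fun h => h.hom) (IsFiltered.coeq_condition f' g')⟩

/-- Equality in a colimit of types over a pseudo-filtered category implies eventual
equality. -/
lemma eventually_eq_of_colimit_eq {H : J ⥤ Type u} {j k : J} {u : H.obj j} {v : H.obj k}
    (h : colimit.ι H j u = colimit.ι H k v) :
    ∃ (l : J) (t : j ⟶ l) (s : k ⟶ l), H.map t u = H.map s v := by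
  have h' := Types.colimit_eq h
  have key : ∀ p q : Σ j, H.obj j, Relation.EqvGen (H.ColimitTypeRel) p q →
      ∃ (l : J) (t : p.1 ⟶ l) (s : q.1 ⟶ l), H.map t p.2 = H.map s q.2 := by
    intro p q hpq
    induction hpq with
    | rel p q hr =>
      obtain ⟨f, hf⟩ := hr
      exact ⟨q.1, f, 𝟙 _, by rw [hf]; simp⟩
    | refl p => exact ⟨p.1, 𝟙 _, 𝟙 _, rfl⟩
    | symm p q _ ih =>
      obtain ⟨l, t, s, hh⟩ := ih
      exact ⟨l, s, t, hh.symm⟩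
    | trans p q r _ _ ih₁ ih₂ =>
      obtain ⟨l, t, s, h₁⟩ := ih₁
      obtain ⟨m, t', s', h₂⟩ := ih₂
      obtain ⟨n, pn, qn, -⟩ :=
        cocone_of_zigzag hpf ((Zigzag.of_inv s).trans (Zigzag.of_hom t'))
      obtain ⟨n', rn, hrn⟩ := coeq_of_parallel hpf (s ≫ pn) (t' ≫ qn)
      refine ⟨n', t ≫ pn ≫ rn, s' ≫ qn ≫ rn, ?_⟩
      have e1 : H.map (t ≫ pn ≫ rn) p.2 = H.map ((s ≫ pn) ≫ rn) q.2 := by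
        simp only [FunctorToTypes.map_comp_apply, h₁]
      have e2 : H.map ((t' ≫ qn) ≫ rn) q.2 = H.map (s' ≫ qn ≫ rn) r.2 := by
        simp only [FunctorToTypes.map_comp_apply, h₂]
      rw [e1, hrn, e2]
  exact key ⟨j, u⟩ ⟨k, v⟩ h'

/-- Two eventual equalities (for two functors) starting at the same pair of objects can be
realized with a common pair of morphisms. -/
lemma combine_eventual_eq {F G : J ⥤ Type u} {j k : J}
    {a : F.obj j} {a' : F.obj k} {b : G.obj j} {b' : G.obj k}
    {l : J} (t : j ⟶ l) (s : k ⟶ l) (hF : F.map t a = F.map s a')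
    {m : J} (t' : j ⟶ m) (s' : k ⟶ m) (hG : G.map t' b = G.map s' b') :
    ∃ (n : J) (α : j ⟶ n) (β : k ⟶ n),
      F.map α a = F.map β a' ∧ G.map α b = G.map β b' := by
  obtain ⟨n₀, pn, qn, -⟩ :=
    cocone_of_zigzag hpf ((Zigzag.of_inv t).trans (Zigzag.of_hom t'))
  obtain ⟨n₁, r₁, hr₁⟩ := coeq_of_parallel hpf (t ≫ pn) (t' ≫ qn)
  obtain ⟨n₂, r₂, hr₂⟩ := coeq_of_parallel hpf ((s ≫ pn) ≫ r₁) ((s' ≫ qn) ≫ r₁)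
  refine ⟨n₂, (t ≫ pn) ≫ r₁ ≫ r₂, (s ≫ pn) ≫ r₁ ≫ r₂, ?_, ?_⟩
  · simp only [FunctorToTypes.map_comp_apply, hF]
  · have hα : (t ≫ pn) ≫ r₁ ≫ r₂ = (t' ≫ qn) ≫ r₁ ≫ r₂ := by
      rw [show (t ≫ pn) ≫ r₁ ≫ r₂ = ((t ≫ pn) ≫ r₁) ≫ r₂ from (Category.assoc _ _ _).symm,
        show (t' ≫ qn) ≫ r₁ ≫ r₂ = ((t' ≫ qn) ≫ r₁) ≫ r₂ from (Category.assoc _ _ _).symm, hr₁]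
    have hβ : (s ≫ pn) ≫ r₁ ≫ r₂ = (s' ≫ qn) ≫ r₁ ≫ r₂ := by
      rw [show (s ≫ pn) ≫ r₁ ≫ r₂ = ((s ≫ pn) ≫ r₁) ≫ r₂ from (Category.assoc _ _ _).symm,
        show (s' ≫ qn) ≫ r₁ ≫ r₂ = ((s' ≫ qn) ≫ r₁) ≫ r₂ from (Category.assoc _ _ _).symm, hr₂]
    rw [hα, hβ]
    simp only [FunctorToTypes.map_comp_apply, hG]

end PseudoFiltered

section PullbackCone

variable {F G H : J ⥤ Type u} (f : F ⟶ H) (g : G ⟶ H)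

/-- The pointwise pullback functor. -/
@[simps]
def pb : J ⥤ Type u where
  obj j := Types.PullbackObj (f.app j) (g.app j)
  map {j k} t := TypeCat.ofHom fun p => ⟨(F.map t p.1.1, G.map t p.1.2), by
    rw [FunctorToTypes.naturality, FunctorToTypes.naturality, p.2]⟩
  map_id j := by ext p : 3; apply Subtype.ext; simp
  map_comp {j k l} t s := by ext p : 3; apply Subtype.ext; simp

/-- First projection from the pointwise pullback. -/
@[simps]
def pbFst : pb f g ⟶ F where
  app j := TypeCat.ofHom fun p => p.1.1
  naturality _ _ _ := rfl

/-- Second projection from the pointwise pullback. -/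
@[simps]
def pbSnd : pb f g ⟶ G where
  app j := TypeCat.ofHom fun p => p.1.2
  naturality _ _ _ := rfl

lemma pb_condition : pbFst f g ≫ f = pbSnd f g ≫ g := by
  ext j p
  exact p.2

/-- The pointwise pullback cone. -/
abbrev pbCone : PullbackCone f g := PullbackCone.mk (pbFst f g) (pbSnd f g) (pb_condition f g)

/-- The pointwise pullback cone is a limit. -/
noncomputable def pbConeIsLimit : IsLimit (pbCone f g) := by
  apply evaluationJointlyReflectsLimits
  intro j
  show IsLimit (((evaluation J (Type u)).obj j).mapCone
    (PullbackCone.mk (pbFst f g) (pbSnd f g) (pb_condition f g)))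
  exact (isLimitMapConePullbackConeEquiv ((evaluation J (Type u)).obj j)
    (pb_condition f g)).symm ((Types.pullbackLimitCone (f.app j) (g.app j)).isLimit)

end PullbackCone

end Stmt15Aux

open Stmt15Aux in
/-- If `J` is a small pseudo-filtered category (every connected component of `J` is
filtered), then the colimit functor `Colim : Set^J ⥤ Set` preserves pullbacks. -/
theorem stmt15 {J : Type u} [SmallCategory J]
    (hpf : ∀ c : ConnectedComponents J, IsFiltered (ConnectedComponents.Component c)) :
    PreservesLimitsOfShape WalkingCospan (colim : (J ⥤ Type u) ⥤ Type u) := by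
  constructor
  intro K
  have : ∀ (F G H : J ⥤ Type u) (f : F ⟶ H) (g : G ⟶ H),
      PreservesLimit (cospan f g) (colim : (J ⥤ Type u) ⥤ Type u) := by
    intro F G H f g
    apply preservesLimit_of_preserves_limit_cone (pbConeIsLimit f g)
    show IsLimit (colim.mapCone (PullbackCone.mk (pbFst f g) (pbSnd f g) (pb_condition f g)))
    refine (isLimitMapConePullbackConeEquiv colim (pb_condition f g)).symm ?_
    have cm : ∀ {A B : J ⥤ Type u} (α : A ⟶ B) (j : J) (x : A.obj j),
        colimMap α (colimit.ι A j x) = colimit.ι B j (α.app j x) :=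
      fun α j x => ConcreteCategory.congr_hom (ι_colimMap α j) x
    refine (PullbackCone.isLimitEquivBijective _).symm ⟨?_, ?_⟩
    · -- injectivity
      intro z w hzw
      obtain ⟨j, p, rfl⟩ := Types.jointly_surjective' z
      obtain ⟨k, q, rfl⟩ := Types.jointly_surjective' w
      have h₁ : colimit.ι F j p.1.1 = colimit.ι F k q.1.1 := by
        have := congr_arg (fun x => x.1.1) hzw
        simp [PullbackCone.toPullbackObj] at this
        erw [cm, cm] at this
        exact this
      have h₂ : colimit.ι G j p.1.2 = colimit.ι G k q.1.2 := by
        have := congr_arg (fun x => x.1.2) hzw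
        simp [PullbackCone.toPullbackObj] at this
        erw [cm, cm] at this
        exact this
      obtain ⟨l, t, s, hF⟩ := eventually_eq_of_colimit_eq hpf h₁
      obtain ⟨m, t', s', hG⟩ := eventually_eq_of_colimit_eq hpf h₂
      obtain ⟨n, α, β, hFn, hGn⟩ := combine_eventual_eq hpf t s hF t' s' hG
      apply Types.colimit_sound' α β
      apply Subtype.ext
      exact Prod.ext hFn hGn
    · -- surjectivity
      rintro ⟨⟨x, y⟩, hxy⟩
      obtain ⟨j, a, rfl⟩ := Types.jointly_surjective' x
      obtain ⟨k, b, rfl⟩ := Types.jointly_surjective' y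
      have hxy' : colimit.ι H j (f.app j a) = colimit.ι H k (g.app k b) := by
        simpa [colimit.ι_map_apply] using hxy
      obtain ⟨l, t, s, hls⟩ := eventually_eq_of_colimit_eq hpf hxy'
      have hp : f.app l (F.map t a) = g.app l (G.map s b) := by
        rw [FunctorToTypes.naturality, FunctorToTypes.naturality]
        exact hls
      refine ⟨colimit.ι (pb f g) l ⟨(F.map t a, G.map s b), hp⟩, ?_⟩
      apply Subtype.ext
      apply Prod.ext
      · simp [PullbackCone.toPullbackObj]
        erw [cm]
        simp
      · simp [PullbackCone.toPullbackObj]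
        erw [cm]
        simp
  exact preservesLimit_of_iso_diagram colim (diagramIsoCospan K).symm
end

section
/- Let K : B → A be a functor with B small and A having small hom-sets, and consider the adjunction Set^K ⊣ Ran_K : Set^B → Set^A given by right Kan extensions computed as pointwise limits, with unit θ. Factorizing each unit morphism θ_S : S → Ran_K(SK) componentwise through its (surjection, injection)-factorization yields a full reflection with stable units H ⊣ I : Set^A → Mono(Set^K), where Mono(Set^K) is the full subcategory of Set^A of functors S for which θ_S is a monomorphism. Moreover, Set^K ∘ y is faithful (equivalently, every representable functor A(A, −) belongs to Mono(Set^K)) if and only if K(ob B), the set of objects of A in the image of K, is a cogenerating set for A, where y : A^op → Set^A is the Yoneda embedding. -/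
open CategoryTheory CategoryTheory.Limits

universe u u₁ u₂

namespace Stmt18Aux

variable {B : Type u₁} [SmallCategory B] {A : Type u₂} [Category.{u} A]
variable (K : B ⥤ A)

/-- Two elements are related if all maps into `K`-objects equalize them. -/
def rel (S : A ⥤ Type u) (a : A) (x x' : S.obj a) : Prop :=
  ∀ (b : B) (h : a ⟶ K.obj b), S.map h x = S.map h x'

lemma rel_map {S : A ⥤ Type u} {a a' : A} (h : a ⟶ a') {x x' : S.obj a}
    (hr : rel K S a x x') : rel K S a' (S.map h x) (S.map h x') := fun b h' => by
  rw [← FunctorToTypes.map_comp_apply, ← FunctorToTypes.map_comp_apply]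
  exact hr b (h ≫ h')

/-- The image functor: quotient of `S` by `rel`. -/
def Robj (S : A ⥤ Type u) : A ⥤ Type u where
  obj a := Quot (rel K S a)
  map h := TypeCat.ofHom (Quot.map (S.map h) (fun _ _ hr => rel_map K h hr))
  map_id a := by
    ext ξ
    induction ξ using Quot.ind with
    | _ x => exact congrArg (Quot.mk _) (FunctorToTypes.map_id_apply S x)
  map_comp h h' := by
    ext ξ
    induction ξ using Quot.ind with
    | _ x => exact congrArg (Quot.mk _) (FunctorToTypes.map_comp_apply S h h' x)

@[simp]
lemma Robj_map_mk {S : A ⥤ Type u} {a a' : A} (h : a ⟶ a') (x : S.obj a) :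
    (Robj K S).map h (Quot.mk _ x) = Quot.mk _ (S.map h x) := rfl

/-- The action of the reflector on morphisms. -/
def Rmap {S S' : A ⥤ Type u} (f : S ⟶ S') : Robj K S ⟶ Robj K S' where
  app a := TypeCat.ofHom (Quot.map (f.app a) (fun x x' hr b h => by
    rw [← FunctorToTypes.naturality, ← FunctorToTypes.naturality, hr b h]))
  naturality a a' h := by
    ext ξ
    induction ξ using Quot.ind with
    | _ x => exact congrArg (Quot.mk _) (NatTrans.naturality_apply f h x)

@[simp]
lemma Rmap_app_mk {S S' : A ⥤ Type u} (f : S ⟶ S') {a : A} (x : S.obj a) :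
    (Rmap K f).app a (Quot.mk _ x) = Quot.mk _ (f.app a x) := rfl

/-- The reflector functor. -/
def Rfunctor : (A ⥤ Type u) ⥤ (A ⥤ Type u) where
  obj := Robj K
  map := Rmap K
  map_id S := by
    apply NatTrans.ext; funext a; ext ξ
    induction ξ using Quot.ind with
    | _ x => rfl
  map_comp f g := by
    apply NatTrans.ext; funext a; ext ξ
    induction ξ using Quot.ind with
    | _ x => rfl

/-- The unit of the reflection. -/
def ηnat : 𝟭 (A ⥤ Type u) ⟶ Rfunctor K where
  app S := { app := fun a => TypeCat.ofHom (Quot.mk _), naturality := fun a a' h => rfl }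
  naturality S S' f := by
    apply NatTrans.ext; funext a; ext x; rfl

section WithAdj

variable (RanK : (B ⥤ Type u) ⥤ (A ⥤ Type u))
variable (adj : (Functor.whiskeringLeft B A (Type u)).obj K ⊣ RanK)

/-- The natural transformation classifying an element `x : S.obj a`. -/
def elt {S : A ⥤ Type u} {a : A} (x : S.obj a) : coyoneda.obj (Opposite.op a) ⟶ S where
  app c := TypeCat.ofHom fun k => S.map k x
  naturality c c' h := by
    ext k
    exact FunctorToTypes.map_comp_apply S k h x

lemma unit_eq_of_rel {S : A ⥤ Type u} {a : A} {x x' : S.obj a}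
    (hr : rel K S a x x') :
    (adj.unit.app S).app a x = (adj.unit.app S).app a x' := by
  have key : ∀ (y : S.obj a),
      (adj.unit.app S).app a y =
        (RanK.map ((Functor.whiskeringLeft B A (Type u)).obj K |>.map (elt y))).app a
          ((adj.unit.app (coyoneda.obj (Opposite.op a))).app a (𝟙 a)) := by
    intro y
    have := types_congr_hom (congr_app (adj.unit.naturality (elt y)) a) (𝟙 a)
    simp only [Functor.id_obj, Functor.id_map, FunctorToTypes.comp, Functor.comp_map] at this
    have he : (elt y).app a (𝟙 a) = y := FunctorToTypes.map_id_apply S y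
    rw [he] at this
    exact this
  rw [key x, key x']
  have hF : ((Functor.whiskeringLeft B A (Type u)).obj K).map (elt x) =
      ((Functor.whiskeringLeft B A (Type u)).obj K).map (elt x') := by
    apply NatTrans.ext; funext b; ext (h : a ⟶ K.obj b)
    exact hr b h
  rw [hF]

lemma rel_of_unit_eq {S : A ⥤ Type u} {a : A} {x x' : S.obj a}
    (he : (adj.unit.app S).app a x = (adj.unit.app S).app a x') :
    rel K S a x x' := by
  intro b h
  have hn : ∀ y : S.obj a,
      (adj.unit.app S).app (K.obj b) (S.map h y) =
        (RanK.obj ((Functor.whiskeringLeft B A (Type u)).obj K |>.obj S)).map h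
          ((adj.unit.app S).app a y) :=
    fun y => NatTrans.naturality_apply (adj.unit.app S) h y
  have h2 : (adj.unit.app S).app (K.obj b) (S.map h x) =
      (adj.unit.app S).app (K.obj b) (S.map h x') := by
    rw [hn x, hn x', he]
  have tri := types_congr_hom (congr_app (adj.left_triangle_components S) b)
  have : ∀ u : S.obj (K.obj b),
      (adj.counit.app ((Functor.whiskeringLeft B A (Type u)).obj K |>.obj S)).app b
        ((adj.unit.app S).app (K.obj b) u) = u := fun u => tri u
  rw [← this (S.map h x), ← this (S.map h x'), h2]

/-- The comparison `Robj K S ⟶ RanK (S ∘ K)`. -/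
def μnat : Rfunctor K ⟶ (Functor.whiskeringLeft B A (Type u)).obj K ⋙ RanK where
  app S :=
    { app := fun a => TypeCat.ofHom (Quot.lift ((adj.unit.app S).app a)
        (fun _ _ hr => unit_eq_of_rel K RanK adj hr))
      naturality := fun a a' h => by
        ext ξ
        induction ξ using Quot.ind with
        | _ x => exact NatTrans.naturality_apply (adj.unit.app S) h x }
  naturality S S' f := by
    apply NatTrans.ext; funext a; ext ξ
    induction ξ using Quot.ind with
    | _ x => exact types_congr_hom (congr_app (adj.unit.naturality f) a) x

include RanK adj in
lemma mk_eq_iff {S : A ⥤ Type u} {a : A} {x x' : S.obj a} :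
    Quot.mk (rel K S a) x = Quot.mk (rel K S a) x' ↔ rel K S a x x' := by
  constructor
  · intro h
    apply rel_of_unit_eq K RanK adj
    exact congrArg ((μnat K RanK adj).app S |>.app a) h
  · exact Quot.sound

include RanK adj in
lemma rel_of_rel_mk {S : A ⥤ Type u} {a : A} {x x' : S.obj a}
    (hr : rel K (Robj K S) a (Quot.mk _ x) (Quot.mk _ x')) : rel K S a x x' := by
  intro b h
  have h1 : Quot.mk (rel K S (K.obj b)) (S.map h x) = Quot.mk _ (S.map h x') := hr b h
  have h2 := (mk_eq_iff K RanK adj).1 h1 b (𝟙 (K.obj b))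
  rwa [FunctorToTypes.map_id_apply, FunctorToTypes.map_id_apply] at h2

end WithAdj

end Stmt18Aux

namespace Stmt18Aux

variable {B : Type u₁} [SmallCategory B] {A : Type u₂} [Category.{u} A]
variable (K : B ⥤ A)
variable (RanK : (B ⥤ Type u) ⥤ (A ⥤ Type u))
variable (adj : (Functor.whiskeringLeft B A (Type u)).obj K ⊣ RanK)

lemma epi_eta (S : A ⥤ Type u) : Epi ((ηnat K).app S) := by
  haveI : ∀ a : A, Epi (((ηnat K).app S).app a) := fun a => by
    rw [epi_iff_surjective]
    exact fun ξ => Quot.exists_rep ξ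
  exact NatTrans.epi_of_epi_app _

lemma mono_mu (S : A ⥤ Type u) : Mono ((μnat K RanK adj).app S) := by
  haveI : ∀ a : A, Mono (((μnat K RanK adj).app S).app a) := fun a => by
    rw [mono_iff_injective]
    intro ξ ξ'
    induction ξ using Quot.ind with
    | _ x =>
    induction ξ' using Quot.ind with
    | _ x' =>
    intro he
    exact Quot.sound (rel_of_unit_eq K RanK adj he)
  exact NatTrans.mono_of_mono_app _

lemma fac (S : A ⥤ Type u) :
    (ηnat K).app S ≫ (μnat K RanK adj).app S = adj.unit.app S := by
  apply NatTrans.ext; funext a; ext x; rfl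

lemma mono_unit_Robj (S : A ⥤ Type u) : Mono (adj.unit.app (Robj K S)) := by
  haveI : ∀ a : A, Mono ((adj.unit.app (Robj K S)).app a) := fun a => by
    rw [mono_iff_injective]
    intro ξ ξ'
    induction ξ using Quot.ind with
    | _ x =>
    induction ξ' using Quot.ind with
    | _ x' =>
    intro he
    exact Quot.sound (rel_of_rel_mk K RanK adj (rel_of_unit_eq K RanK adj he))
  exact NatTrans.mono_of_mono_app _

lemma universal (S M₀ : A ⥤ Type u) (hM : Mono (adj.unit.app M₀)) (f : S ⟶ M₀) :
    ∃! g : Robj K S ⟶ M₀, (ηnat K).app S ≫ g = f := by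
  haveI := hM
  have hinj : ∀ a, Function.Injective ((adj.unit.app M₀).app a) :=
    fun a => (mono_iff_injective _).1 inferInstance
  have hwd : ∀ (a : A) (x x' : S.obj a), rel K S a x x' → f.app a x = f.app a x' := by
    intro a x x' hr
    apply hinj a
    have hx := types_congr_hom (congr_app (adj.unit.naturality f) a) x
    have hx' := types_congr_hom (congr_app (adj.unit.naturality f) a) x'
    simp only [Functor.id_obj, Functor.id_map, FunctorToTypes.comp, Functor.comp_map] at hx hx'
    rw [hx, hx', unit_eq_of_rel K RanK adj hr]
  refine ⟨{ app := fun a => TypeCat.ofHom (Quot.lift (f.app a) (hwd a))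
            naturality := fun a a' h => by
              ext ξ
              induction ξ using Quot.ind with
              | _ x => exact NatTrans.naturality_apply f h x }, ?_, ?_⟩
  · apply NatTrans.ext; funext a; ext x; rfl
  · intro g' hg'
    haveI := epi_eta K S
    apply (cancel_epi ((ηnat K).app S)).1
    rw [hg']
    apply NatTrans.ext; funext a; ext x; rfl

include RanK adj in
lemma stable (S : A ⥤ Type u) {P' X' : A ⥤ Type u} (g : X' ⟶ Robj K S)
    (q : P' ⟶ S) (p : P' ⟶ X')
    (hpb : IsPullback q p ((ηnat K).app S) g) :
    IsPullback (Rmap K q) (Rmap K p) (Rmap K ((ηnat K).app S)) (Rmap K g) := by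
  have hq : ∀ a : A,
      IsPullback (q.app a) (p.app a) (((ηnat K).app S).app a) (g.app a) :=
    fun a => hpb.map ((evaluation A (Type u)).obj a)
  have jinj : ∀ (a : A) (w w' : P'.obj a),
      q.app a w = q.app a w' → p.app a w = p.app a w' → w = w' :=
    fun a w w' h1 h2 => PullbackCone.IsLimit.type_ext (hq a).isLimit h1 h2
  have ex : ∀ (a : A) (x : S.obj a) (y : X'.obj a),
      Quot.mk (rel K S a) x = g.app a y →
        ∃ w : P'.obj a, q.app a w = x ∧ p.app a w = y := by
    intro a x y hxy
    refine ⟨(PullbackCone.IsLimit.equivPullbackObj (hq a).isLimit).symm ⟨(x, y), hxy⟩, ?_, ?_⟩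
    · exact PullbackCone.IsLimit.equivPullbackObj_symm_apply_fst (hq a).isLimit _
    · exact PullbackCone.IsLimit.equivPullbackObj_symm_apply_snd (hq a).isLimit _
  -- commutativity at the level of elements
  have hc : ∀ (a : A) (w : P'.obj a),
      Quot.mk (rel K S a) (q.app a w) = g.app a (p.app a w) :=
    fun a w => types_congr_hom (congr_app hpb.w a) w
  haveI hisoη : IsIso (Rmap K ((ηnat K).app S)) := by
    have : ∀ a : A, IsIso ((Rmap K ((ηnat K).app S)).app a) := by
      intro a
      rw [isIso_iff_bijective]
      constructor
      · intro ξ ξ'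
        induction ξ using Quot.ind with
        | _ x =>
        induction ξ' using Quot.ind with
        | _ x' =>
        intro he
        exact Quot.sound (rel_of_rel_mk K RanK adj ((mk_eq_iff K RanK adj).1 he))
      · intro ζ
        induction ζ using Quot.ind with
        | _ ξ =>
        induction ξ using Quot.ind with
        | _ x => exact ⟨Quot.mk _ x, rfl⟩
    exact NatIso.isIso_of_isIso_app _
  haveI hisop : IsIso (Rmap K p) := by
    have : ∀ a : A, IsIso ((Rmap K p).app a) := by
      intro a
      rw [isIso_iff_bijective]
      constructor
      · intro ξ ξ'
        induction ξ using Quot.ind with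
        | _ w =>
        induction ξ' using Quot.ind with
        | _ w' =>
        intro he
        have hrel : rel K X' a (p.app a w) (p.app a w') := (mk_eq_iff K RanK adj).1 he
        apply Quot.sound
        intro b h
        apply jinj (K.obj b)
        · -- q-side
          rw [NatTrans.naturality_apply q h w, NatTrans.naturality_apply q h w']
          have hmk : Quot.mk (rel K S (K.obj b)) (S.map h (q.app a w)) =
              Quot.mk (rel K S (K.obj b)) (S.map h (q.app a w')) := by
            have e1 : ∀ w0 : P'.obj a, Quot.mk (rel K S (K.obj b)) (S.map h (q.app a w0)) =
                g.app (K.obj b) (X'.map h (p.app a w0)) := by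
              intro w0
              have := congrArg ((Robj K S).map h) (hc a w0)
              rw [Robj_map_mk] at this
              rw [this]
              exact (NatTrans.naturality_apply g h (p.app a w0)).symm
            rw [e1 w, e1 w', hrel b h]
          have h2 := (mk_eq_iff K RanK adj).1 hmk b (𝟙 (K.obj b))
          rwa [FunctorToTypes.map_id_apply, FunctorToTypes.map_id_apply] at h2
        · -- p-side
          rw [NatTrans.naturality_apply p h w, NatTrans.naturality_apply p h w',
            hrel b h]
      · intro ζ
        induction ζ using Quot.ind with
        | _ y =>
        obtain ⟨x, hx⟩ := Quot.exists_rep (g.app a y)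
        obtain ⟨w, hw1, hw2⟩ := ex a x y hx
        exact ⟨Quot.mk _ w, congrArg (Quot.mk _) hw2⟩
    exact NatIso.isIso_of_isIso_app _
  have sq : CommSq (Rmap K p) (Rmap K q) (Rmap K g) (Rmap K ((ηnat K).app S)) := by
    constructor
    apply NatTrans.ext; funext a; ext ξ
    induction ξ using Quot.ind with
    | _ w => exact congrArg (Quot.mk _) (hc a w).symm
  exact (@IsPullback.of_horiz_isIso _ _ _ _ _ _ _ _ _ _ hisop hisoη sq).flip

lemma faithful_iff_cogen :
    (coyoneda ⋙ (Functor.whiskeringLeft B A (Type u)).obj K).Faithful ↔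
      ∀ {A' A₀ : A} (f g : A' ⟶ A₀), f ≠ g →
        ∃ (b : B) (h : A₀ ⟶ K.obj b), f ≫ h ≠ g ≫ h := by
  constructor
  · intro hF A' A₀ f g hfg
    by_contra hno
    push_neg at hno
    apply hfg
    have heq : (coyoneda ⋙ (Functor.whiskeringLeft B A (Type u)).obj K).map f.op =
        (coyoneda ⋙ (Functor.whiskeringLeft B A (Type u)).obj K).map g.op := by
      apply NatTrans.ext; funext b; ext (k : A₀ ⟶ K.obj b)
      exact hno b k
    exact Quiver.Hom.op_inj (hF.map_injective heq)
  · intro hc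
    refine ⟨fun {X Y} {φ ψ} he => ?_⟩
    have : φ.unop = ψ.unop := by
      by_contra hne
      obtain ⟨b, h, hbh⟩ := hc φ.unop ψ.unop hne
      exact hbh (types_congr_hom (congr_app he b) h)
    exact Quiver.Hom.unop_inj this

lemma cogen_to_mono
    (hc : ∀ {A' A₀ : A} (f g : A' ⟶ A₀), f ≠ g →
      ∃ (b : B) (h : A₀ ⟶ K.obj b), f ≫ h ≠ g ≫ h) (a : A) :
    Mono (adj.unit.app (coyoneda.obj (Opposite.op a))) := by
  haveI : ∀ a' : A, Mono ((adj.unit.app (coyoneda.obj (Opposite.op a))).app a') := fun a' => by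
    rw [mono_iff_injective]
    intro x x' he
    have hr := rel_of_unit_eq K RanK adj he
    by_contra hne
    obtain ⟨b, h, hbh⟩ := hc x x' hne
    exact hbh (hr b h)
  exact NatTrans.mono_of_mono_app _

lemma mono_to_cogen
    (hm : ∀ a : A, Mono (adj.unit.app (coyoneda.obj (Opposite.op a))))
    {A' A₀ : A} (f g : A' ⟶ A₀) (hfg : f ≠ g) :
    ∃ (b : B) (h : A₀ ⟶ K.obj b), f ≫ h ≠ g ≫ h := by
  by_contra hno
  push_neg at hno
  apply hfg
  haveI := hm A'
  have hinj : Function.Injective ((adj.unit.app (coyoneda.obj (Opposite.op A'))).app A₀) :=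
    (mono_iff_injective _).1 inferInstance
  exact hinj (unit_eq_of_rel K RanK adj (fun b h => hno b h))

end Stmt18Aux


/-- Let `K : B ⥤ A` with `B` small and `A` with (`Type u`-valued) hom-sets, and
`Set^K ⊣ Ran_K` the adjunction given by right Kan extensions, with unit `θ`. Then:
(1) factorizing each unit morphism `θ_S` componentwise through its
(surjection, injection)-factorization (i.e. `θ = μ ∘ η` with each `η_S` epi and each
`μ_S` mono in `Set^A`) yields a full reflection `I ⊣ H : Set^A → Mono(Set^K)` — the
reflector lands in the full subcategory `Mono(Set^K) = {S | θ_S mono}` and each `η_S` is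
universal among morphisms into it — which has stable units (the reflector preserves
every pullback of a cospan `X ⟶ I(S) ⟵ S` whose right leg is the unit);
(2) `Set^K ∘ y` is faithful iff every representable `A(a, −)` lies in `Mono(Set^K)`,
iff `K(ob B)` is a cogenerating set for `A`. -/
theorem stmt18 {B : Type u₁} [SmallCategory B] {A : Type u₂} [Category.{u} A]
    (K : B ⥤ A)
    (RanK : (B ⥤ Type u) ⥤ (A ⥤ Type u))
    (adj : (Functor.whiskeringLeft B A (Type u)).obj K ⊣ RanK) :
    (∃ (R : (A ⥤ Type u) ⥤ (A ⥤ Type u)) (η : 𝟭 (A ⥤ Type u) ⟶ R)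
        (μ : R ⟶ (Functor.whiskeringLeft B A (Type u)).obj K ⋙ RanK),
      (∀ S : A ⥤ Type u, Epi (η.app S)) ∧
      (∀ S : A ⥤ Type u, Mono (μ.app S)) ∧
      (∀ S : A ⥤ Type u, η.app S ≫ μ.app S = adj.unit.app S) ∧
      (∀ S : A ⥤ Type u, Mono (adj.unit.app (R.obj S))) ∧
      (∀ (S M₀ : A ⥤ Type u), Mono (adj.unit.app M₀) →
        ∀ f : S ⟶ M₀, ∃! g : R.obj S ⟶ M₀, η.app S ≫ g = f) ∧
      (∀ (S : A ⥤ Type u) {P' X' : A ⥤ Type u}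
          (g : X' ⟶ R.obj S) (q : P' ⟶ S) (p : P' ⟶ X'),
        IsPullback q p (η.app S) g →
          IsPullback (R.map q) (R.map p) (R.map (η.app S)) (R.map g))) ∧
    (((coyoneda ⋙ (Functor.whiskeringLeft B A (Type u)).obj K).Faithful ↔
        ∀ a : A, Mono (adj.unit.app (coyoneda.obj (Opposite.op a)))) ∧
     ((coyoneda ⋙ (Functor.whiskeringLeft B A (Type u)).obj K).Faithful ↔
        ∀ {A' A₀ : A} (f g : A' ⟶ A₀), f ≠ g →
          ∃ (b : B) (h : A₀ ⟶ K.obj b), f ≫ h ≠ g ≫ h)) := by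
  constructor
  · refine ⟨Stmt18Aux.Rfunctor K, Stmt18Aux.ηnat K, Stmt18Aux.μnat K RanK adj,
      Stmt18Aux.epi_eta K, Stmt18Aux.mono_mu K RanK adj,
      Stmt18Aux.fac K RanK adj, Stmt18Aux.mono_unit_Robj K RanK adj,
      Stmt18Aux.universal K RanK adj, ?_⟩
    intro S P' X' g q p hpb
    exact Stmt18Aux.stable K RanK adj S g q p hpb
  · refine ⟨?_, Stmt18Aux.faithful_iff_cogen K⟩
    constructor
    · intro hF
      exact fun a => Stmt18Aux.cogen_to_mono K RanK adj
        ((Stmt18Aux.faithful_iff_cogen K).1 hF) a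
    · intro hm
      exact (Stmt18Aux.faithful_iff_cogen K).2
        (fun {A' A₀} f g hfg => Stmt18Aux.mono_to_cogen K RanK adj hm f g hfg)
end
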